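/- Let (V, S) be a spanning tree of the complete graph on V, let s ≠ t in V, and let T := {v ∈ V : deg_S(v) is odd} △ {s} △ {t}. Then |T| is even, and for every U with s ∈ U ⊆ V \ {t}: |S ∩ δ(U)| is odd if and only if |U ∩ T| is even. -/

import Mathlib

open Finset
open scoped symmDiff

open scoped Classical in
/-- The set of edges `δ(U)` of the complete graph on `V` with exactly one endpoint in `U`. -/
noncomputable def cutEdges {V : Type*} [Fintype V] (U : Finset V) : Finset (Sym2 V) :=
  Finset.univ.filter (fun e => ∃ v w : V, e = s(v, w) ∧ v ∈ U ∧ w ∉ U)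

open scoped Classical in
/-- The degree of `v` in the edge set `S`. -/
noncomputable def degS {V : Type*} (S : Finset (Sym2 V)) (v : V) : ℕ :=
  (S.filter (fun e => v ∈ e)).card

open scoped Classical in
/-- Parity correction set `T = {v : deg_S(v) odd} △ {s} △ {t}`. -/
noncomputable def wrongParity {V : Type*} [Fintype V] (S : Finset (Sym2 V)) (s t : V) :
    Finset V :=
  (Finset.univ.filter (fun v => Odd (degS S v))) ∆ {s} ∆ {t}

lemma aux_cast_parity (n : ℕ) : (n : ZMod 2) = if Odd n then 1 else 0 := by
  conv_lhs => rw [← ZMod.natCast_mod n 2]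
  simp only [Nat.odd_iff]
  rcases Nat.mod_two_eq_zero_or_one n with h | h <;> simp [h]

lemma aux_even_iff (n : ℕ) : Even n ↔ (n : ZMod 2) = 0 := by
  rw [aux_cast_parity]
  constructor
  · intro h; simp [Nat.not_odd_iff_even.2 h]
  · intro h
    by_contra hc
    rw [if_pos (Nat.not_even_iff_odd.1 hc)] at h
    exact one_ne_zero h

lemma aux_odd_iff (n : ℕ) : Odd n ↔ (n : ZMod 2) = 1 := by
  rw [aux_cast_parity]
  constructor
  · intro h; simp [h]
  · intro h
    by_contra hc
    rw [if_neg hc] at h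
    exact one_ne_zero h.symm

lemma aux_card_symmDiff {α : Type*} [DecidableEq α] (X Y : Finset α) :
    (((X ∆ Y).card : ZMod 2)) = X.card + Y.card := by
  have h : (X ∆ Y).card = (X \ Y).card + (Y \ X).card := by
    rw [symmDiff_def, sup_eq_union, card_union_of_disjoint disjoint_sdiff_sdiff]
  have h2 := Finset.card_sdiff_add_card_inter X Y
  have h3 := Finset.card_sdiff_add_card_inter Y X
  have key : (X ∆ Y).card + ((X ∩ Y).card + (Y ∩ X).card) = X.card + Y.card := by
    omega
  have hc := congrArg (fun n : ℕ => (n : ZMod 2)) key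
  push_cast at hc
  rw [Finset.inter_comm Y X] at hc
  have h4 : ((X ∩ Y).card : ZMod 2) + ((X ∩ Y).card : ZMod 2) = 0 := by
    rw [← two_mul]; simp [show (2 : ZMod 2) = 0 by decide]
  rwa [h4, add_zero] at hc

lemma aux_mem_cutEdges {V : Type*} [Fintype V] (U : Finset V) (a b : V) :
    s(a, b) ∈ cutEdges U ↔ (a ∈ U ∧ b ∉ U) ∨ (b ∈ U ∧ a ∉ U) := by
  simp only [cutEdges, mem_filter, mem_univ, true_and]
  constructor
  · rintro ⟨v, w, h, hv, hw⟩
    rw [Sym2.eq_iff] at h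
    rcases h with ⟨rfl, rfl⟩ | ⟨rfl, rfl⟩
    · exact Or.inl ⟨hv, hw⟩
    · exact Or.inr ⟨hv, hw⟩
  · rintro (⟨ha, hb⟩ | ⟨hb, ha⟩)
    · exact ⟨a, b, rfl, ha, hb⟩
    · exact ⟨b, a, Sym2.eq_swap, hb, ha⟩

lemma aux_edge_count {V : Type*} [Fintype V] [DecidableEq V] (U : Finset V) (a b : V)
    (hab : a ≠ b) :
    (((U.filter (fun v => v ∈ s(a, b))).card : ZMod 2))
      = if s(a, b) ∈ cutEdges U then 1 else 0 := by
  have h1 : U.filter (fun v => v ∈ s(a, b))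
      = U.filter (fun v => v = a) ∪ U.filter (fun v => v = b) := by
    rw [← Finset.filter_or]
    apply Finset.filter_congr
    intro x _
    simp [Sym2.mem_iff]
  rw [h1, Finset.filter_eq', Finset.filter_eq']
  by_cases ha : a ∈ U <;> by_cases hb : b ∈ U
  · rw [if_pos ha, if_pos hb, if_neg (by simp [aux_mem_cutEdges, ha, hb]),
      card_union_of_disjoint (by simp [hab])]
    simp only [card_singleton]
    rw [show ((1 + 1 : ℕ) : ZMod 2) = 0 by decide]
  · rw [if_pos ha, if_neg hb, if_pos (by simp [aux_mem_cutEdges, ha, hb])]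
    simp
  · rw [if_neg ha, if_pos hb, if_pos (by simp [aux_mem_cutEdges, ha, hb])]
    simp
  · rw [if_neg ha, if_neg hb, if_neg (by simp [aux_mem_cutEdges, ha, hb])]
    simp

lemma aux_sum_deg {V : Type*} [Fintype V] [DecidableEq V] (S : Finset (Sym2 V))
    (hdiag : ∀ e ∈ S, ¬ e.IsDiag) (U : Finset V) :
    (∑ v ∈ U, ((degS S v : ZMod 2))) = ((S ∩ cutEdges U).card : ZMod 2) := by
  classical
  have h1 : ∀ v : V, ((degS S v : ZMod 2)) = ∑ e ∈ S, if v ∈ e then (1 : ZMod 2) else 0 := by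
    intro v
    rw [degS, Finset.card_filter]
    push_cast
    rfl
  calc (∑ v ∈ U, ((degS S v : ZMod 2)))
      = ∑ v ∈ U, ∑ e ∈ S, if v ∈ e then (1 : ZMod 2) else 0 :=
        Finset.sum_congr rfl fun v _ => h1 v
    _ = ∑ e ∈ S, ∑ v ∈ U, if v ∈ e then (1 : ZMod 2) else 0 := Finset.sum_comm
    _ = ∑ e ∈ S, if e ∈ cutEdges U then (1 : ZMod 2) else 0 := by
        apply Finset.sum_congr rfl
        intro e he
        have hsum : (∑ v ∈ U, if v ∈ e then (1 : ZMod 2) else 0)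
            = ((U.filter (fun v => v ∈ e)).card : ZMod 2) := by
          rw [Finset.card_filter]; push_cast; rfl
        rw [hsum]
        induction e using Sym2.ind with
        | _ a b =>
          have hab : a ≠ b := fun h => hdiag _ he (by simp [Sym2.mk_isDiag_iff, h])
          exact aux_edge_count U a b hab
    _ = ((S ∩ cutEdges U).card : ZMod 2) := by
        rw [← Finset.filter_mem_eq_inter, Finset.card_filter]
        push_cast
        rfl

lemma aux_odd_count {V : Type*} [Fintype V] (S : Finset (Sym2 V)) (U : Finset V) :
    (((U.filter (fun v => Odd (degS S v))).card : ZMod 2))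
      = ∑ v ∈ U, ((degS S v : ZMod 2)) := by
  rw [Finset.card_filter]
  push_cast
  apply Finset.sum_congr rfl
  intro v _
  exact (aux_cast_parity _).symm

lemma aux_wrongParity_eq {V : Type*} [Fintype V] [DecidableEq V] (S : Finset (Sym2 V))
    (s t : V) :
    wrongParity S s t = (Finset.univ.filter (fun v => Odd (degS S v))) ∆ {s} ∆ {t} := by
  ext v
  simp [wrongParity, Finset.mem_symmDiff]

/-- For a spanning tree `(V,S)` and `T` the set of wrong-parity vertices, `|T|` is even,
and an `s`-`t`-cut is crossed an odd number of times by `S` iff it is not a `T`-cut. -/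
theorem stmt_5 {V : Type*} [Fintype V] [DecidableEq V] (s t : V) (hst : s ≠ t)
    (S : Finset (Sym2 V)) (hdiag : ∀ e ∈ S, ¬ e.IsDiag)
    (htree : (SimpleGraph.fromEdgeSet (S : Set (Sym2 V))).IsTree) :
    Even (wrongParity S s t).card ∧
      ∀ U : Finset V, s ∈ U → U ⊆ univ \ {t} →
        (Odd ((S ∩ cutEdges U).card) ↔ Even ((U ∩ wrongParity S s t).card)) := by
  have hcut_univ : cutEdges (univ : Finset V) = ∅ := by
    ext e
    simp [cutEdges]
  have hA : ((Finset.univ.filter (fun v => Odd (degS S v))).card : ZMod 2) = 0 := by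
    rw [aux_odd_count, aux_sum_deg S hdiag, hcut_univ]
    simp
  constructor
  · rw [aux_even_iff, aux_wrongParity_eq, aux_card_symmDiff, aux_card_symmDiff, hA]
    simp
    decide
  · intro U hs hU
    have ht : t ∉ U := by
      intro h
      have := hU h
      simp at this
    have hUT : ((U ∩ wrongParity S s t).card : ZMod 2)
        = ((U.filter (fun v => Odd (degS S v))).card : ZMod 2) + 1 := by
      rw [aux_wrongParity_eq]
      rw [show ∀ X Y : Finset V, U ∩ (X ∆ Y) = (U ∩ X) ∆ (U ∩ Y) from fun X Y => by
        ext v; simp [Finset.mem_symmDiff]; tauto]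
      rw [show ∀ X Y : Finset V, U ∩ (X ∆ Y) = (U ∩ X) ∆ (U ∩ Y) from fun X Y => by
        ext v; simp [Finset.mem_symmDiff]; tauto]
      rw [aux_card_symmDiff, aux_card_symmDiff]
      have h2 : U ∩ ({s} : Finset V) = {s} := by
        ext v; simp; rintro rfl; exact hs
      have h3 : U ∩ ({t} : Finset V) = ∅ := by
        ext v; simp; rintro hv rfl; exact ht hv
      have h1 : U ∩ Finset.univ.filter (fun v => Odd (degS S v))
          = U.filter (fun v => Odd (degS S v)) := by
        ext v; simp
      rw [h1, h2, h3]
      simp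
    have hkey : ((U.filter (fun v => Odd (degS S v))).card : ZMod 2)
        = ((S ∩ cutEdges U).card : ZMod 2) :=
      (aux_odd_count S U).trans (aux_sum_deg S hdiag U)
    rw [aux_odd_iff, aux_even_iff, hUT, hkey]
    have h2 : (1 : ZMod 2) + 1 = 0 := by decide
    constructor
    · intro h; rw [h, h2]
    · intro h
      calc ((S ∩ cutEdges U).card : ZMod 2) = (((S ∩ cutEdges U).card : ZMod 2) + 1) + 1 := by
            rw [add_assoc, h2, add_zero]
        _ = 0 + 1 := by rw [h]
        _ = 1 := zero_add 1
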